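/- Let n ≥ 2 and r ≥ 2, and set F_D = N_r·(X_r + X_r² + ⋯ + X_r^(n−1)), an r×r integer matrix. If det F_D ≠ 0, then det F_D = 1. -/

import Mathlib

open Matrix Finset

namespace Stmt7

/-- The companion-type matrix `X_r` (0-indexed). -/
def Xm (r : ℕ) : Matrix (Fin r) (Fin r) ℤ :=
  Matrix.of fun i j => if (i : ℕ) = r - 1 then -1 else if (i : ℕ) + 1 = (j : ℕ) then 1 else 0

/-- `fv r t` for `t < r` is the `t`-th standard basis row; `fv r r` is the all `-1` row. -/
def fv (r t : ℕ) : Fin r → ℤ := fun j => if t = r then -1 else if (j : ℕ) = t then 1 else 0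

lemma sum_ite_nat (r t : ℕ) (ht : t < r) (f : Fin r → ℤ) :
    (∑ i : Fin r, if (i : ℕ) = t then f i else 0) = f ⟨t, ht⟩ := by
  rw [Finset.sum_eq_single (⟨t, ht⟩ : Fin r)]
  · simp
  · intro b _ hb
    rw [if_neg]
    intro h; exact hb (Fin.ext h)
  · intro h; simp at h

/-- column sums of `Xm`. -/
lemma col_sum (r : ℕ) (hr : 2 ≤ r) (j : Fin r) :
    (∑ k : Fin r, Xm r k j) = if (j : ℕ) = 0 then -1 else 0 := by
  have hsplit : ∀ k : Fin r, Xm r k j =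
      (if (k : ℕ) = r - 1 then -1 else 0) +
      (if (k : ℕ) = (j : ℕ) - 1 ∧ 1 ≤ (j : ℕ) then 1 else 0) := by
    intro k
    have hj := j.isLt
    have hk := k.isLt
    simp only [Xm, Matrix.of_apply]
    split_ifs <;> omega
  rw [Finset.sum_congr rfl fun k _ => hsplit k, Finset.sum_add_distrib]
  rw [sum_ite_nat r (r-1) (by omega) (fun _ => (-1 : ℤ))]
  by_cases hj : 1 ≤ (j : ℕ)
  · have h2 : (∑ k : Fin r, if (k : ℕ) = (j : ℕ) - 1 ∧ 1 ≤ (j : ℕ) then (1:ℤ) else 0)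
        = ∑ k : Fin r, if (k : ℕ) = (j : ℕ) - 1 then (1:ℤ) else 0 := by
      refine Finset.sum_congr rfl fun k _ => by simp [hj]
    rw [h2, sum_ite_nat r ((j:ℕ)-1) (by omega) (fun _ => (1:ℤ))]
    have : ¬ ((j:ℕ) = 0) := by omega
    simp [this]
  · have h2 : (∑ k : Fin r, if (k : ℕ) = (j : ℕ) - 1 ∧ 1 ≤ (j : ℕ) then (1:ℤ) else 0) = 0 := by
      refine Finset.sum_eq_zero fun k _ => by simp [hj]
    rw [h2]
    have : (j:ℕ) = 0 := by omega
    simp [this]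

/-- The basic row-shift step. -/
lemma step (r : ℕ) (hr : 2 ≤ r) (t : ℕ) (ht : t ≤ r) (j : Fin r) :
    (∑ k : Fin r, fv r t k * Xm r k j) = fv r ((t + 1) % (r + 1)) j := by
  by_cases htr : t = r
  · rw [htr]
    have h1 : ∀ k : Fin r, fv r r k * Xm r k j = - Xm r k j := by
      intro k; simp [fv]
    rw [Finset.sum_congr rfl fun k _ => h1 k, Finset.sum_neg_distrib, col_sum r hr j]
    have : (r + 1) % (r + 1) = 0 := Nat.mod_self _
    rw [this]
    simp only [fv]
    have h0 : ¬ ((0:ℕ) = r) := by omega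
    split_ifs <;> simp_all <;> omega
  · have htlt : t < r := lt_of_le_of_ne ht htr
    have h1 : ∀ k : Fin r, fv r t k * Xm r k j = if (k : ℕ) = t then Xm r k j else 0 := by
      intro k
      simp only [fv, if_neg htr]
      split_ifs <;> ring
    rw [Finset.sum_congr rfl fun k _ => h1 k, sum_ite_nat r t htlt]
    have hmod : (t + 1) % (r + 1) = t + 1 := Nat.mod_eq_of_lt (by omega)
    rw [hmod]
    simp only [Xm, fv, Matrix.of_apply]
    have hj := j.isLt
    split_ifs <;> omega

/-- Rows of powers of `Xm`. -/
lemma row_pow (r : ℕ) (hr : 2 ≤ r) (c : ℕ) (i j : Fin r) :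
    (Xm r ^ c) i j = fv r (((i : ℕ) + c) % (r + 1)) j := by
  induction c generalizing j with
  | zero =>
    have : ((i:ℕ) + 0) % (r+1) = (i:ℕ) := by
      rw [Nat.add_zero]; exact Nat.mod_eq_of_lt (by omega)
    rw [this, pow_zero]
    simp only [Matrix.one_apply, fv]
    have := i.isLt
    have := j.isLt
    split_ifs with h1 h2 h3 <;> first
      | rfl
      | omega
      | (exfalso; exact h3 (by cases h1; rfl))
      | (exfalso; exact h1 (Fin.ext h2.symm))
  | succ c ih =>
    rw [pow_succ, Matrix.mul_apply]
    rw [Finset.sum_congr rfl fun k _ => by rw [ih k]]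
    have hle : ((i:ℕ) + c) % (r+1) ≤ r := by
      have := Nat.mod_lt ((i:ℕ) + c) (show 0 < r+1 by omega); omega
    rw [step r hr _ hle j, Nat.mod_add_mod, ← Nat.add_assoc]

/-- The sum of all the rows `fv` vanishes. -/
lemma fv_sum (r : ℕ) (hr : 2 ≤ r) (j : Fin r) :
    (∑ t ∈ Finset.range (r + 1), fv r t j) = 0 := by
  rw [Finset.sum_range_succ]
  have h1 : ∀ t ∈ Finset.range r, fv r t j = if (j:ℕ) = t then 1 else 0 := by
    intro t ht
    rw [Finset.mem_range] at ht
    simp [fv, Nat.ne_of_lt ht]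
  rw [Finset.sum_congr rfl h1, Finset.sum_ite_eq]
  simp [fv, j.isLt]

section reindex

variable {M : Type*} [AddCommMonoid M]

lemma sum_range_zmod (N : ℕ) [NeZero N] (g : ℕ → M) :
    ∑ t ∈ Finset.range N, g (t % N) = ∑ z : ZMod N, g z.val := by
  rw [← Fin.sum_univ_eq_sum_range]
  refine Fintype.sum_bijective (fun i : Fin N => ((i : ℕ) : ZMod N)) ?_ _ _ ?_
  · rw [Fintype.bijective_iff_injective_and_card]
    constructor
    · intro a b hab
      apply Fin.ext
      have := congrArg ZMod.val hab
      rwa [ZMod.val_natCast_of_lt a.isLt, ZMod.val_natCast_of_lt b.isLt] at this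
    · simp [ZMod.card]
  · intro i
    rw [ZMod.val_natCast]

lemma sum_shift (N : ℕ) [NeZero N] (g : ℕ → M) (a : ℕ) :
    ∑ t ∈ Finset.range N, g ((a + t) % N) = ∑ t ∈ Finset.range N, g (t % N) := by
  have h1 : ∑ t ∈ Finset.range N, g ((a + t) % N)
      = ∑ t ∈ Finset.range N, (fun s => g ((a + s) % N)) (t % N) := by
    refine Finset.sum_congr rfl fun t ht => ?_
    rw [Finset.mem_range] at ht
    simp [Nat.mod_eq_of_lt ht]
  rw [h1, sum_range_zmod N (fun s => g ((a + s) % N)), sum_range_zmod N g]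
  have h2 : ∀ z : ZMod N, g ((a + z.val) % N) = g (((a : ZMod N) + z).val) := by
    intro z
    rw [ZMod.val_add, ZMod.val_natCast, Nat.mod_add_mod]
  rw [Finset.sum_congr rfl fun z _ => h2 z]
  exact Equiv.sum_comp (Equiv.addLeft ((a : ZMod N))) (fun z => g z.val)

lemma sum_mulshift (N : ℕ) [NeZero N] (g : ℕ → M) (c : ℕ) (hc : Nat.Coprime c N) :
    ∑ t ∈ Finset.range N, g ((t * c) % N) = ∑ t ∈ Finset.range N, g (t % N) := by
  have h1 : ∑ t ∈ Finset.range N, g ((t * c) % N)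
      = ∑ t ∈ Finset.range N, (fun s => g ((s * c) % N)) (t % N) := by
    refine Finset.sum_congr rfl fun t ht => ?_
    rw [Finset.mem_range] at ht
    simp [Nat.mod_eq_of_lt ht]
  rw [h1, sum_range_zmod N (fun s => g ((s * c) % N)), sum_range_zmod N g]
  have h2 : ∀ z : ZMod N, g ((z.val * c) % N) = g ((z * (ZMod.unitOfCoprime c hc : ZMod N)).val) := by
    intro z
    rw [ZMod.coe_unitOfCoprime, ZMod.val_mul, ZMod.val_natCast, Nat.mul_mod,
      Nat.mod_eq_of_lt (ZMod.val_lt z)]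
  rw [Finset.sum_congr rfl fun z _ => h2 z]
  exact Fintype.sum_bijective _ (Units.mulRight_bijective (ZMod.unitOfCoprime c hc))
    _ _ (fun z => rfl)

end reindex
/-- The sum of the first `r+1` powers of `Xm` vanishes. -/
lemma sum_pow_eq_zero (r : ℕ) (hr : 2 ≤ r) :
    (∑ t ∈ Finset.range (r + 1), Xm r ^ t) = 0 := by
  haveI : NeZero (r + 1) := ⟨by omega⟩
  ext i j
  rw [Matrix.sum_apply]
  have h1 : ∀ t ∈ Finset.range (r+1), (Xm r ^ t) i j = fv r (((i:ℕ) + t) % (r+1)) j :=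
    fun t _ => row_pow r hr t i j
  rw [Finset.sum_congr rfl h1, sum_shift (r+1) (fun s => fv r s j) (i : ℕ)]
  have h2 : ∀ t ∈ Finset.range (r+1), fv r (t % (r+1)) j = fv r t j := by
    intro t ht
    rw [Finset.mem_range] at ht
    rw [Nat.mod_eq_of_lt ht]
  rw [Finset.sum_congr rfl h2, fv_sum r hr j]
  rfl

/-- `Xm r` has order dividing `r+1`. -/
lemma pow_period (r : ℕ) (hr : 2 ≤ r) : Xm r ^ (r + 1) = 1 := by
  ext i j
  rw [row_pow r hr (r+1) i j, Nat.add_mod_right, Nat.mod_eq_of_lt (by omega : (i:ℕ) < r+1)]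
  simp only [fv, Matrix.one_apply]
  have := i.isLt
  have := j.isLt
  split_ifs with h1 h2 h3 h4 <;> first
    | rfl
    | omega
    | (exfalso; exact h3 (by cases h2; rfl))
    | (exfalso; exact h2 (Fin.ext h4.symm))

/-- Multiplying an `fv` row by a power of `Xm` shifts the index. -/
lemma fv_mul_pow (r : ℕ) (hr : 2 ≤ r) (t : ℕ) (ht : t ≤ r) (c : ℕ) (j : Fin r) :
    (∑ k : Fin r, fv r t k * (Xm r ^ c) k j) = fv r ((t + c) % (r + 1)) j := by
  haveI : NeZero (r + 1) := ⟨by omega⟩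
  by_cases htr : t = r
  · rw [htr]
    have h1 : ∀ k : Fin r, fv r r k * (Xm r ^ c) k j = - fv r (((k:ℕ) + c) % (r+1)) j := by
      intro k
      rw [row_pow r hr c k j]
      simp only [fv]
      split_ifs <;> ring
    rw [Finset.sum_congr rfl fun k _ => h1 k, Finset.sum_neg_distrib]
    have hz : (∑ t ∈ Finset.range (r+1), fv r (((t:ℕ) + c) % (r+1)) j) = 0 := by
      have hcomm : ∀ t, ((t:ℕ) + c) % (r+1) = (c + t) % (r+1) := fun t => by rw [Nat.add_comm]
      rw [Finset.sum_congr rfl fun t _ => by rw [hcomm t]]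
      rw [sum_shift (r+1) (fun s => fv r s j) c]
      have h2 : ∀ t ∈ Finset.range (r+1), fv r (t % (r+1)) j = fv r t j := by
        intro t ht'
        rw [Finset.mem_range] at ht'
        rw [Nat.mod_eq_of_lt ht']
      rw [Finset.sum_congr rfl h2, fv_sum r hr j]
    rw [Finset.sum_range_succ, ← Fin.sum_univ_eq_sum_range (fun t => fv r ((t + c) % (r+1)) j) r]
      at hz
    have := eq_neg_of_add_eq_zero_left hz
    rw [this, neg_neg]
  · have htlt : t < r := lt_of_le_of_ne ht htr
    have h1 : ∀ k : Fin r, fv r t k * (Xm r ^ c) k j = if (k : ℕ) = t then (Xm r ^ c) k j else 0 := by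
      intro k
      simp only [fv, if_neg htr]
      split_ifs <;> ring
    rw [Finset.sum_congr rfl fun k _ => h1 k, sum_ite_nat r t htlt, row_pow r hr c _ j]

/-- The "multiplication by x^c" matrix. -/
def Pm (r c : ℕ) : Matrix (Fin r) (Fin r) ℤ :=
  Matrix.of fun i j => fv r (((i : ℕ) * c) % (r + 1)) j

/-- Multiplying an `fv` row by `Pm r c` multiplies the index by `c`. -/
lemma fv_mul_P (r : ℕ) (hr : 2 ≤ r) (c : ℕ) (hc : Nat.Coprime c (r + 1))
    (t : ℕ) (ht : t ≤ r) (j : Fin r) :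
    (∑ k : Fin r, fv r t k * Pm r c k j) = fv r ((t * c) % (r + 1)) j := by
  haveI : NeZero (r + 1) := ⟨by omega⟩
  by_cases htr : t = r
  · rw [htr]
    have h1 : ∀ k : Fin r, fv r r k * Pm r c k j = - fv r (((k:ℕ) * c) % (r+1)) j := by
      intro k
      show fv r r k * fv r _ j = _
      simp only [fv]
      split_ifs <;> ring
    rw [Finset.sum_congr rfl fun k _ => h1 k, Finset.sum_neg_distrib]
    have hz : (∑ t ∈ Finset.range (r+1), fv r ((t * c) % (r+1)) j) = 0 := by
      rw [sum_mulshift (r+1) (fun s => fv r s j) c hc]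
      have h2 : ∀ t ∈ Finset.range (r+1), fv r (t % (r+1)) j = fv r t j := by
        intro t ht'
        rw [Finset.mem_range] at ht'
        rw [Nat.mod_eq_of_lt ht']
      rw [Finset.sum_congr rfl h2, fv_sum r hr j]
    rw [Finset.sum_range_succ, ← Fin.sum_univ_eq_sum_range (fun t => fv r ((t * c) % (r+1)) j) r]
      at hz
    have := eq_neg_of_add_eq_zero_left hz
    rw [this, neg_neg]
  · have htlt : t < r := lt_of_le_of_ne ht htr
    have h1 : ∀ k : Fin r, fv r t k * Pm r c k j = if (k : ℕ) = t then Pm r c k j else 0 := by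
      intro k
      simp only [fv, if_neg htr]
      split_ifs <;> ring
    rw [Finset.sum_congr rfl fun k _ => h1 k, sum_ite_nat r t htlt]
    rfl

/-- The key intertwining identity `X · P(c) = P(c) · X^c`. -/
lemma X_mul_P (r : ℕ) (hr : 2 ≤ r) (c : ℕ) (hc : Nat.Coprime c (r + 1)) :
    Xm r * Pm r c = Pm r c * Xm r ^ c := by
  ext i j
  rw [Matrix.mul_apply, Matrix.mul_apply]
  have hXrow : ∀ k : Fin r, Xm r i k = fv r (((i:ℕ) + 1) % (r+1)) k := by
    intro k
    have := row_pow r hr 1 i k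
    rwa [pow_one] at this
  have hle1 : ((i:ℕ) + 1) % (r+1) ≤ r := by
    have := Nat.mod_lt ((i:ℕ) + 1) (show 0 < r+1 by omega); omega
  have hle2 : ((i:ℕ) * c) % (r+1) ≤ r := by
    have := Nat.mod_lt ((i:ℕ) * c) (show 0 < r+1 by omega); omega
  rw [Finset.sum_congr rfl fun k _ => by rw [hXrow k], fv_mul_P r hr c hc _ hle1 j]
  have hProw : ∀ k : Fin r, Pm r c i k = fv r (((i:ℕ) * c) % (r+1)) k := fun k => rfl
  rw [Finset.sum_congr rfl fun k _ => by rw [hProw k], fv_mul_pow r hr _ hle2 c j]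
  rw [Nat.mod_mul_mod, Nat.mod_add_mod, Nat.add_mul, Nat.one_mul]

/-- `P(a) · P(b) = 1` when `a·b ≡ 1 (mod r+1)`. -/
lemma P_mul_P (r : ℕ) (hr : 2 ≤ r) (a b : ℕ) (hb : Nat.Coprime b (r + 1))
    (hab : (a * b) % (r + 1) = 1) :
    Pm r a * Pm r b = 1 := by
  ext i j
  rw [Matrix.mul_apply]
  have hle : ((i:ℕ) * a) % (r+1) ≤ r := by
    have := Nat.mod_lt ((i:ℕ) * a) (show 0 < r+1 by omega); omega
  have hProw : ∀ k : Fin r, Pm r a i k = fv r (((i:ℕ) * a) % (r+1)) k := fun k => rfl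
  rw [Finset.sum_congr rfl fun k _ => by rw [hProw k], fv_mul_P r hr b hb _ hle j]
  rw [Nat.mod_mul_mod]
  have : ((i:ℕ) * a * b) % (r+1) = (i:ℕ) := by
    rw [Nat.mul_assoc, Nat.mul_mod, hab, Nat.mul_one, Nat.mod_mod_of_dvd _ dvd_rfl,
      Nat.mod_eq_of_lt (by omega : (i:ℕ) < r+1)]
  rw [this]
  simp only [fv, Matrix.one_apply]
  have := i.isLt
  have := j.isLt
  split_ifs with h1 h2 h3 h4 <;> first
    | rfl
    | omega
    | (exfalso; exact h3 (by cases h2; rfl))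
    | (exfalso; exact h2 (Fin.ext h4.symm))
lemma mulVec_sum {r : ℕ} (s : Finset ℕ) (A : ℕ → Matrix (Fin r) (Fin r) ℤ) (v : Fin r → ℤ) :
    (∑ t ∈ s, A t).mulVec v = ∑ t ∈ s, (A t).mulVec v := by
  classical
  induction s using Finset.induction_on with
  | empty => simp [Matrix.mulVec]
  | insert a s hnot ih =>
      rw [Finset.sum_insert hnot, Finset.sum_insert hnot, Matrix.add_mulVec, ih]

lemma det_X_sub_one_ne (r : ℕ) (hr : 2 ≤ r) : (Xm r - 1).det ≠ 0 := by
  intro h0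
  obtain ⟨v, hv, hveq⟩ := (Matrix.exists_mulVec_eq_zero_iff).2 h0
  have hXv : (Xm r).mulVec v = v := by
    have := hveq
    rw [Matrix.sub_mulVec, Matrix.one_mulVec, sub_eq_zero] at this
    exact this
  have hpow : ∀ t : ℕ, (Xm r ^ t).mulVec v = v := by
    intro t
    induction t with
    | zero => simp [Matrix.one_mulVec]
    | succ t ih =>
        rw [pow_succ, ← Matrix.mulVec_mulVec, hXv, ih]
  have hsum : ((∑ t ∈ Finset.range (r+1), Xm r ^ t).mulVec v) = (r+1) • v := by
    rw [mulVec_sum, Finset.sum_congr rfl fun t _ => hpow t, Finset.sum_const,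
      Finset.card_range]
  rw [sum_pow_eq_zero r hr] at hsum
  have : (r+1) • v = 0 := by
    rw [← hsum]
    simp [Matrix.mulVec]
  rcases smul_eq_zero.1 this with h | h
  · omega
  · exact hv h

lemma eq_zero_of_det_ne {r : ℕ} (S B : Matrix (Fin r) (Fin r) ℤ)
    (hS : S.det ≠ 0) (h : S * B = 0) : B = 0 := by
  have hcols : ∀ j : Fin r, (fun k => B k j) = 0 := by
    intro j
    by_contra hne
    apply hS
    refine (Matrix.exists_mulVec_eq_zero_iff).1 ⟨fun k => B k j, hne, ?_⟩
    funext i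
    have := congrFun (congrFun h i) j
    rw [Matrix.mul_apply] at this
    simpa [Matrix.mulVec, dotProduct] using this
  ext i j
  have := congrFun (hcols j) i
  simpa using this

/-- `N * X` is the lower-triangular all-ones matrix. -/
lemma N_mul_X (r : ℕ) (hr : 2 ≤ r) :
    (Matrix.of fun i j : Fin r => if i ≤ j then (-1 : ℤ) else 0) * Xm r
      = Matrix.of fun i j : Fin r => if (j : ℕ) ≤ (i : ℕ) then 1 else 0 := by
  ext i j
  rw [Matrix.mul_apply]
  have hsplit : ∀ k : Fin r,
      (Matrix.of fun i j : Fin r => if i ≤ j then (-1 : ℤ) else 0) i k * Xm r k j =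
      (if (k : ℕ) = r - 1 then 1 else 0) +
      (if (k : ℕ) = (j : ℕ) - 1 ∧ 1 ≤ (j:ℕ) ∧ (i:ℕ) ≤ (j:ℕ) - 1 then -1 else 0) := by
    intro k
    have hj := j.isLt
    have hk := k.isLt
    have hi := i.isLt
    simp only [Xm, Matrix.of_apply, Fin.le_def]
    split_ifs <;> push_cast <;> first | ring1 | omega
  rw [Finset.sum_congr rfl fun k _ => hsplit k, Finset.sum_add_distrib,
    sum_ite_nat r (r-1) (by omega) (fun _ => (1 : ℤ))]
  by_cases hc : 1 ≤ (j:ℕ) ∧ (i:ℕ) ≤ (j:ℕ) - 1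
  · have h2 : (∑ k : Fin r, if (k : ℕ) = (j : ℕ) - 1 ∧ 1 ≤ (j:ℕ) ∧ (i:ℕ) ≤ (j:ℕ) - 1
        then (-1:ℤ) else 0) = ∑ k : Fin r, if (k : ℕ) = (j : ℕ) - 1 then (-1:ℤ) else 0 := by
      refine Finset.sum_congr rfl fun k _ => by simp [hc.1, hc.2]
    rw [h2, sum_ite_nat r ((j:ℕ)-1) (by omega) (fun _ => (-1:ℤ))]
    have : ¬ ((j:ℕ) ≤ (i:ℕ)) := by omega
    rw [Matrix.of_apply, if_neg this]; norm_num
  · have h2 : (∑ k : Fin r, if (k : ℕ) = (j : ℕ) - 1 ∧ 1 ≤ (j:ℕ) ∧ (i:ℕ) ≤ (j:ℕ) - 1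
        then (-1:ℤ) else 0) = 0 := by
      refine Finset.sum_eq_zero fun k _ => by
        rw [if_neg]; intro hcon; exact hc ⟨hcon.2.1, hcon.2.2⟩
    rw [h2]
    have : (j:ℕ) ≤ (i:ℕ) := by omega
    rw [Matrix.of_apply, if_pos this]; norm_num

lemma det_N_mul_X (r : ℕ) (hr : 2 ≤ r) :
    ((Matrix.of fun i j : Fin r => if i ≤ j then (-1 : ℤ) else 0) * Xm r).det = 1 := by
  rw [N_mul_X r hr]
  have hlt : (Matrix.of fun i j : Fin r => if (j : ℕ) ≤ (i : ℕ) then (1:ℤ) else 0).BlockTriangular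
      OrderDual.toDual := by
    intro i j hij
    have hij' : i < j := hij
    simp only [Matrix.of_apply]
    rw [if_neg (by omega : ¬ ((j:ℕ) ≤ (i:ℕ))) ]
  rw [Matrix.det_of_lowerTriangular _ hlt]
  simp
end Stmt7

open Matrix

/-- the integer matrix `F_D = N_r·(X_r + ⋯ + X_r^(n-1))` has
determinant 1 whenever its determinant is nonzero. -/
theorem stmt_7 (n r : ℕ) (hn : 2 ≤ n) (hr : 2 ≤ r)
    (Nr Xr : Matrix (Fin r) (Fin r) ℤ)
    (hNr : ∀ i j : Fin r, Nr i j = if i ≤ j then -1 else 0)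
    (hXr : ∀ i j : Fin r, Xr i j =
      if (i : ℕ) = r - 1 then -1
      else if (i : ℕ) + 1 = (j : ℕ) then 1 else 0)
    (hdet : (Nr * ∑ i ∈ Finset.Icc 1 (n - 1), Xr ^ i).det ≠ 0) :
    (Nr * ∑ i ∈ Finset.Icc 1 (n - 1), Xr ^ i).det = 1 := by
  have hX : Xr = Stmt7.Xm r := by
    ext i j; rw [hXr]; rfl
  have hN : Nr = Matrix.of (fun i j : Fin r => if i ≤ j then (-1 : ℤ) else 0) := by
    ext i j; rw [hNr]; rfl
  subst hX hN
  haveI : NeZero (r + 1) := ⟨by omega⟩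
  set m := n - 1 with hmdef
  have hm1 : 1 ≤ m := by omega
  set X := Stmt7.Xm r with hXdef
  set A := ∑ i ∈ Finset.range m, X ^ i with hAdef
  have key : (∑ i ∈ Finset.Icc 1 m, X ^ i) = A * X := by
    rw [← Finset.Ico_add_one_right_eq_Icc, Finset.sum_Ico_eq_sum_range]
    have h1 : m + 1 - 1 = m := by omega
    rw [h1, hAdef, Finset.sum_mul]
    refine Finset.sum_congr rfl fun i _ => ?_
    rw [← pow_succ, Nat.add_comm]
  have hgeom : A * (X - 1) = X ^ m - 1 := geom_sum_mul _ m
  by_cases hco : Nat.Coprime m (r + 1)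
  · -- coprime case : the determinant is `1`
    haveI : Fact (1 < r + 1) := ⟨by omega⟩
    set u := ZMod.unitOfCoprime m hco with hu
    set k := ((u⁻¹ : (ZMod (r + 1))ˣ) : ZMod (r + 1)).val with hkdef
    have hk1 : ((k : ℕ) : ZMod (r + 1)) = ((u⁻¹ : (ZMod (r + 1))ˣ) : ZMod (r + 1)) :=
      ZMod.natCast_rightInverse _
    have hcast : ((m * k : ℕ) : ZMod (r + 1)) = 1 := by
      push_cast [hk1]
      rw [← ZMod.coe_unitOfCoprime m hco, ← hu, ← Units.val_mul, mul_inv_cancel, Units.val_one]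
    have hmk : (m * k) % (r + 1) = 1 := by
      have h2 := congrArg ZMod.val hcast
      rwa [ZMod.val_natCast, ZMod.val_one] at h2
    have hkco : Nat.Coprime k (r + 1) := by
      have h1 : Nat.Coprime (m * k) (r + 1) := by
        unfold Nat.Coprime
        rw [Nat.gcd_comm, Nat.gcd_rec, hmk, Nat.gcd_one_left]
      exact Nat.Coprime.coprime_dvd_left (dvd_mul_left k m) h1
    have hPQ := Stmt7.P_mul_P r hr m k hkco hmk
    have hXP := Stmt7.X_mul_P r hr m hco
    have hdetP : (Stmt7.Pm r m).det * (Stmt7.Pm r k).det = 1 := by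
      rw [← Matrix.det_mul, hPQ, Matrix.det_one]
    have hPne : (Stmt7.Pm r m).det ≠ 0 := left_ne_zero_of_mul_eq_one hdetP
    have hcomm : (X - 1) * Stmt7.Pm r m = Stmt7.Pm r m * (X ^ m - 1) := by
      rw [sub_mul, mul_sub, one_mul, mul_one, hXdef, hXP]
    have hdXm : (X ^ m - 1).det = (X - 1).det := by
      have h2 := congrArg Matrix.det hcomm
      rw [Matrix.det_mul, Matrix.det_mul] at h2
      apply mul_left_cancel₀ hPne
      rw [← h2, mul_comm]
    have hXone : (X - 1).det ≠ 0 := Stmt7.det_X_sub_one_ne r hr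
    have hA : A.det = 1 := by
      have h2 := congrArg Matrix.det hgeom
      rw [Matrix.det_mul, hdXm] at h2
      exact mul_right_cancel₀ hXone (by rw [h2, one_mul])
    have hNX := Stmt7.det_N_mul_X r hr
    rw [Matrix.det_mul] at hNX
    rw [key, Matrix.det_mul, Matrix.det_mul, hA, one_mul, ← hXdef] at *
    exact hNX
  · -- non-coprime case : contradiction with `hdet`
    exfalso
    set d := Nat.gcd m (r + 1) with hd
    have hd1 : d ∣ m := Nat.gcd_dvd_left _ _
    have hd2 : d ∣ (r + 1) := Nat.gcd_dvd_right _ _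
    have hdne : d ≠ 0 := by
      intro h0
      rw [hd, Nat.gcd_eq_zero_iff] at h0
      omega
    have hdge2 : 2 ≤ d := by
      have : d ≠ 1 := hco
      omega
    set hh := (r + 1) / d with hhdef
    have hdh : d * hh = r + 1 := Nat.mul_div_cancel' hd2
    have hh1 : 1 ≤ hh := by
      rcases Nat.eq_zero_or_pos hh with h0 | h0
      · rw [h0, Nat.mul_zero] at hdh; omega
      · exact h0
    haveI : NeZero hh := ⟨by omega⟩
    set e := m / d with hedef
    have hde : d * e = m := Nat.mul_div_cancel' hd1
    set W := ∑ j ∈ Finset.range hh, X ^ (d * j) with hW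
    have hXdc : ∀ c : ℕ, X ^ (d * c) = X ^ (d * (c % hh)) := by
      intro c
      conv_lhs => rw [← Nat.div_add_mod c hh]
      rw [Nat.mul_add, pow_add]
      have h3 : d * (hh * (c / hh)) = (r + 1) * (c / hh) := by rw [← Nat.mul_assoc, hdh]
      rw [h3, pow_mul, hXdef, Stmt7.pow_period r hr, one_pow, one_mul]
    have hXmW : X ^ m * W = W := by
      rw [hW, Finset.mul_sum]
      have h1 : ∀ j, X ^ m * X ^ (d * j) = X ^ (d * (e + j)) := by
        intro j; rw [← pow_add]; congr 1; rw [← hde]; ring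
      rw [Finset.sum_congr rfl fun j _ => h1 j,
        Finset.sum_congr rfl fun j _ => hXdc (e + j),
        Stmt7.sum_shift hh (fun c => X ^ (d * c)) e]
      refine Finset.sum_congr rfl fun j hj => ?_
      rw [Finset.mem_range] at hj
      rw [Nat.mod_eq_of_lt hj]
    have hXmW0 : (X ^ m - 1) * W = 0 := by
      rw [sub_mul, one_mul, hXmW, sub_self]
    have hdetS : (∑ i ∈ Finset.Icc 1 m, X ^ i).det ≠ 0 := by
      intro h0; apply hdet; rw [Matrix.det_mul, h0, mul_zero]
    have hcommX : X * (X - 1) = (X - 1) * X := by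
      rw [mul_sub, sub_mul, mul_one, one_mul]
    have hcommXm : (X ^ m - 1) * X = X * (X ^ m - 1) := by
      rw [mul_sub, sub_mul, mul_one, one_mul, ← pow_succ, ← pow_succ']
    have hSzero : (∑ i ∈ Finset.Icc 1 m, X ^ i) * ((X - 1) * W) = 0 := by
      rw [key]
      calc A * X * ((X - 1) * W) = A * (X * (X - 1)) * W := by
            rw [Matrix.mul_assoc, Matrix.mul_assoc, Matrix.mul_assoc]
        _ = (A * (X - 1)) * (X * W) := by
            rw [hcommX, Matrix.mul_assoc, Matrix.mul_assoc, Matrix.mul_assoc]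
        _ = (X ^ m - 1) * (X * W) := by rw [hgeom]
        _ = ((X ^ m - 1) * X) * W := by rw [Matrix.mul_assoc]
        _ = X * ((X ^ m - 1) * W) := by rw [hcommXm, Matrix.mul_assoc]
        _ = 0 := by rw [hXmW0, Matrix.mul_zero]
    have hXW : (X - 1) * W = 0 := Stmt7.eq_zero_of_det_ne _ _ hdetS hSzero
    have hXW' : X * W = W := by
      rw [sub_mul, one_mul, sub_eq_zero] at hXW
      exact hXW
    have hpow : ∀ t : ℕ, X ^ t * W = W := by
      intro t
      induction t with
      | zero => rw [pow_zero, one_mul]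
      | succ t ih => rw [pow_succ', Matrix.mul_assoc, ih, hXW']
    have hrW : (r + 1) • W = 0 := by
      have h2 : (∑ t ∈ Finset.range (r + 1), X ^ t) * W = (r + 1) • W := by
        rw [Finset.sum_mul, Finset.sum_congr rfl fun t _ => hpow t, Finset.sum_const,
          Finset.card_range]
      rw [hXdef, Stmt7.sum_pow_eq_zero r hr, Matrix.zero_mul] at h2
      exact h2.symm
    haveI : NeZero r := ⟨by omega⟩
    have hW00 : W 0 0 = 1 := by
      rw [hW, Matrix.sum_apply]
      have h1 : ∀ j ∈ Finset.range hh, (X ^ (d * j)) 0 0 = if j = 0 then (1 : ℤ) else 0 := by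
        intro j hj
        rw [Finset.mem_range] at hj
        rw [hXdef, Stmt7.row_pow r hr (d * j) 0 0]
        have hjb : d * j + d ≤ d * hh := by
          have h4 : d * (j + 1) ≤ d * hh := Nat.mul_le_mul_left d (by omega)
          rwa [Nat.mul_succ] at h4
        have hjb' : d * j + d ≤ r + 1 := by rw [← hdh]; exact hjb
        have hb : (((0 : Fin r) : ℕ) + d * j) % (r + 1) = d * j := by
          have h0 : ((0 : Fin r) : ℕ) = 0 := rfl
          rw [h0, Nat.zero_add]
          exact Nat.mod_eq_of_lt (by omega)
        rw [hb]
        simp only [Stmt7.fv]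
        have h0 : ((0 : Fin r) : ℕ) = 0 := rfl
        rw [h0]
        have hner : d * j ≠ r := by omega
        rcases Nat.eq_zero_or_pos j with hj0 | hj0
        · subst hj0
          rw [Nat.mul_zero, if_neg (by omega : ¬ ((0:ℕ) = r))]
        · have hne0 : d * j ≠ 0 := Nat.mul_ne_zero (by omega) (by omega)
          rw [if_neg hner, if_neg (by omega : ¬ ((0:ℕ) = d * j)), if_neg (by omega : ¬ (j = 0))]
      rw [Finset.sum_congr rfl h1, Finset.sum_ite_eq' (Finset.range hh) 0 (fun _ => (1:ℤ))]
      rw [if_pos (Finset.mem_range.mpr (by omega))]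
    have hfinal : ((r + 1) : ℕ) • W 0 0 = 0 := by
      rw [← Matrix.smul_apply, hrW]
      rfl
    rw [hW00, nsmul_eq_mul, Nat.cast_add, Nat.cast_one, mul_one] at hfinal
    have : (r : ℤ) + 1 ≠ 0 := by positivity
    exact this hfinal
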